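/- arXiv:1102.2038 — 4 statements merged into one kernel-verified Lean document; each statement's English description precedes it below -/
import Mathlib

section
/- Let f(x₀,r) be a scalar-valued infinitely differentiable function on an open subset of ℝ² (variables x₀ and r, with r > 0). Then for every integer m ≥ 1, ∂_r² D_r(m){f} = D_r(m){∂_r² f} − 2m · D_r(m+1){f}. -/
noncomputable section

/-- Partial derivative with respect to the second variable `r` of a function on `ℝ²`. -/
def pr2 (g : ℝ × ℝ → ℝ) (p : ℝ × ℝ) : ℝ := fderiv ℝ g p (0, 1)

/-- The operator `D_r(m) = ((1/r) ∂_r)^m`. -/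
def DrOp : ℕ → (ℝ × ℝ → ℝ) → (ℝ × ℝ → ℝ)
  | 0, f => f
  | m + 1, f => fun p => (1 / p.2) * pr2 (DrOp m f) p

/-- The operator `D^r(m)`, defined by `D^r(0){f} = f` and `D^r(m){f} = ∂_r (D^r(m-1){f} / r)`. -/
def DRop : ℕ → (ℝ × ℝ → ℝ) → (ℝ × ℝ → ℝ)
  | 0, f => f
  | m + 1, f => fun p => pr2 (fun q => DRop m f q / q.2) p

section Helpers

variable {U : Set (ℝ × ℝ)}


lemma pr2_congr {a b : ℝ × ℝ → ℝ} (hU : IsOpen U) (h : ∀ q ∈ U, a q = b q)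
    {p : ℝ × ℝ} (hp : p ∈ U) : pr2 a p = pr2 b p := by
  have he : a =ᶠ[nhds p] b := Filter.eventuallyEq_of_mem (hU.mem_nhds hp) h
  simp only [pr2, he.fderiv_eq]

lemma contDiffOn_pr2 {g : ℝ × ℝ → ℝ} (hU : IsOpen U) (hg : ContDiffOn ℝ (⊤ : ℕ∞) g U) :
    ContDiffOn ℝ (⊤ : ℕ∞) (pr2 g) U := by
  have h1 : ContDiffOn ℝ (⊤ : ℕ∞) (fderiv ℝ g) U := hg.fderiv_of_isOpen hU (by simp)
  exact h1.clm_apply contDiffOn_const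

lemma diffAt_of_contDiffOn {g : ℝ × ℝ → ℝ} (hU : IsOpen U) (hg : ContDiffOn ℝ (⊤ : ℕ∞) g U)
    {p : ℝ × ℝ} (hp : p ∈ U) : DifferentiableAt ℝ g p :=
  (hg.differentiableOn (by simp)).differentiableAt (hU.mem_nhds hp)

lemma pr2_mul {a b : ℝ × ℝ → ℝ} {p : ℝ × ℝ} (ha : DifferentiableAt ℝ a p)
    (hb : DifferentiableAt ℝ b p) :
    pr2 (fun q => a q * b q) p = pr2 a p * b p + a p * pr2 b p := by
  simp only [pr2, fderiv_fun_mul ha hb, ContinuousLinearMap.add_apply,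
    ContinuousLinearMap.smul_apply, smul_eq_mul]
  ring

lemma pr2_sub_const_mul {a b : ℝ × ℝ → ℝ} {c : ℝ} {p : ℝ × ℝ} (ha : DifferentiableAt ℝ a p)
    (hb : DifferentiableAt ℝ b p) :
    pr2 (fun q => a q - c * b q) p = pr2 a p - c * pr2 b p := by
  simp only [pr2, fderiv_fun_sub ha ((hb.const_mul c)), fderiv_const_mul hb c,
    ContinuousLinearMap.sub_apply, ContinuousLinearMap.smul_apply, smul_eq_mul]

lemma pr2_comp_snd {c : ℝ → ℝ} {c' : ℝ} {p : ℝ × ℝ} (hc : HasDerivAt c c' p.2) :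
    pr2 (fun q => c q.2) p = c' := by
  have h : HasFDerivAt (fun q : ℝ × ℝ => c q.2) (c' • (ContinuousLinearMap.snd ℝ ℝ ℝ)) p :=
    hc.comp_hasFDerivAt p hasFDerivAt_snd
  simp [pr2, h.fderiv]

lemma hasDerivAt_one_div {x : ℝ} (hx : x ≠ 0) :
    HasDerivAt (fun y : ℝ => 1 / y) (-(1 / x ^ 2)) x := by
  simpa [one_div] using hasDerivAt_inv hx

lemma pr2_inv_snd {p : ℝ × ℝ} (hp : p.2 ≠ 0) :
    pr2 (fun q : ℝ × ℝ => 1 / q.2) p = -(1 / p.2 ^ 2) :=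
  pr2_comp_snd (hasDerivAt_one_div hp)

lemma pr2_neg_inv_sq {p : ℝ × ℝ} (hp : p.2 ≠ 0) :
    pr2 (fun q : ℝ × ℝ => -(1 / q.2 ^ 2)) p = 2 / p.2 ^ 3 := by
  refine pr2_comp_snd (c := fun y => -(1 / y ^ 2)) ?_
  have h : HasDerivAt (fun y : ℝ => (y ^ 2)⁻¹) (-(2 * p.2 ^ 1) / (p.2 ^ 2) ^ 2) p.2 :=
    (hasDerivAt_pow 2 p.2).inv (pow_ne_zero 2 hp)
  have h2 : HasDerivAt (fun y : ℝ => -(y ^ 2)⁻¹) (-(-(2 * p.2 ^ 1) / (p.2 ^ 2) ^ 2)) p.2 := h.neg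
  convert h2 using 1
  · funext y; simp [one_div]
  · field_simp

lemma diffAt_inv_snd {p : ℝ × ℝ} (hp : p.2 ≠ 0) :
    DifferentiableAt ℝ (fun q : ℝ × ℝ => 1 / q.2) p := by
  simp only [one_div]
  exact differentiableAt_snd.inv hp

lemma pr2_div_mul {g : ℝ × ℝ → ℝ} (hU : IsOpen U) (hUpos : U ⊆ {p : ℝ × ℝ | 0 < p.2})
    (hg : ContDiffOn ℝ (⊤ : ℕ∞) g U) {p : ℝ × ℝ} (hp : p ∈ U) :
    pr2 (fun q => (1 / q.2) * g q) p = -(1 / p.2 ^ 2) * g p + (1 / p.2) * pr2 g p := by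
  have hne : p.2 ≠ 0 := ne_of_gt (hUpos hp)
  rw [pr2_mul (diffAt_inv_snd hne) (diffAt_of_contDiffOn hU hg hp), pr2_inv_snd hne]

lemma contDiffOn_inv_snd (hUpos : U ⊆ {p : ℝ × ℝ | 0 < p.2}) :
    ContDiffOn ℝ (⊤ : ℕ∞) (fun p : ℝ × ℝ => 1 / p.2) U := by
  simp only [one_div]
  exact contDiff_snd.contDiffOn.inv fun p hp => ne_of_gt (hUpos hp)

lemma contDiffOn_DrOp {f : ℝ × ℝ → ℝ} (hU : IsOpen U) (hUpos : U ⊆ {p : ℝ × ℝ | 0 < p.2})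
    (hf : ContDiffOn ℝ (⊤ : ℕ∞) f U) : ∀ m, ContDiffOn ℝ (⊤ : ℕ∞) (DrOp m f) U
  | 0 => hf
  | m + 1 => (contDiffOn_inv_snd hUpos).mul
      (contDiffOn_pr2 hU (contDiffOn_DrOp hU hUpos hf m))

lemma pr2_add {a b : ℝ × ℝ → ℝ} {p : ℝ × ℝ} (ha : DifferentiableAt ℝ a p)
    (hb : DifferentiableAt ℝ b p) :
    pr2 (fun q => a q + b q) p = pr2 a p + pr2 b p := by
  simp only [pr2]
  rw [fderiv_fun_add ha hb]
  simp

lemma diffAt_neg_inv_sq {p : ℝ × ℝ} (hne : p.2 ≠ 0) :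
    DifferentiableAt ℝ (fun q : ℝ × ℝ => -(1 / q.2 ^ 2)) p := by
  simp only [one_div]
  exact ((differentiableAt_snd.pow 2).inv (pow_ne_zero 2 hne)).neg

/-- Second r-derivative of `(1/r) * ∂_r g`. -/
lemma step {g : ℝ × ℝ → ℝ} (hU : IsOpen U) (hUpos : U ⊆ {p : ℝ × ℝ | 0 < p.2})
    (hg : ContDiffOn ℝ (⊤ : ℕ∞) g U) {p : ℝ × ℝ} (hp : p ∈ U) :
    pr2 (pr2 (fun q => (1 / q.2) * pr2 g q)) p
      = 2 / p.2 ^ 3 * pr2 g p - 2 / p.2 ^ 2 * pr2 (pr2 g) p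
        + 1 / p.2 * pr2 (pr2 (pr2 g)) p := by
  have hne : p.2 ≠ 0 := ne_of_gt (hUpos hp)
  have hg1 : ContDiffOn ℝ (⊤ : ℕ∞) (pr2 g) U := contDiffOn_pr2 hU hg
  have hg2 : ContDiffOn ℝ (⊤ : ℕ∞) (pr2 (pr2 g)) U := contDiffOn_pr2 hU hg1
  have h1 : ∀ q ∈ U, pr2 (fun q => (1 / q.2) * pr2 g q) q
      = -(1 / q.2 ^ 2) * pr2 g q + (1 / q.2) * pr2 (pr2 g) q := fun q hq =>
    pr2_div_mul hU hUpos hg1 hq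
  rw [pr2_congr hU h1 hp]
  have hd1 : DifferentiableAt ℝ (fun q : ℝ × ℝ => -(1 / q.2 ^ 2) * pr2 g q) p :=
    (diffAt_neg_inv_sq hne).mul (diffAt_of_contDiffOn hU hg1 hp)
  have hd2 : DifferentiableAt ℝ (fun q : ℝ × ℝ => (1 / q.2) * pr2 (pr2 g) q) p :=
    (diffAt_inv_snd hne).mul (diffAt_of_contDiffOn hU hg2 hp)
  rw [pr2_add hd1 hd2,
    pr2_mul (diffAt_neg_inv_sq hne) (diffAt_of_contDiffOn hU hg1 hp),
    pr2_neg_inv_sq hne, pr2_div_mul hU hUpos hg2 hp]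
  field_simp
  ring

lemma aux (f : ℝ × ℝ → ℝ) (hU : IsOpen U) (hUpos : U ⊆ {p : ℝ × ℝ | 0 < p.2})
    (hf : ContDiffOn ℝ (⊤ : ℕ∞) f U) :
    ∀ m, ∀ p ∈ U, pr2 (pr2 (DrOp m f)) p
      = DrOp m (fun q => pr2 (pr2 f) q) p - 2 * (m : ℝ) * DrOp (m + 1) f p
  | 0 => by intro p hp; simp [DrOp]
  | m + 1 => by
    intro p hp
    have hne : p.2 ≠ 0 := ne_of_gt (hUpos hp)
    have hg : ContDiffOn ℝ (⊤ : ℕ∞) (DrOp m f) U := contDiffOn_DrOp hU hUpos hf m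
    have hpf2 : ContDiffOn ℝ (⊤ : ℕ∞) (fun q => pr2 (pr2 f) q) U :=
      contDiffOn_pr2 hU (contDiffOn_pr2 hU hf)
    have hDm1 : ContDiffOn ℝ (⊤ : ℕ∞) (DrOp (m + 1) f) U := contDiffOn_DrOp hU hUpos hf (m + 1)
    have hDmpf : ContDiffOn ℝ (⊤ : ℕ∞) (DrOp m (fun q => pr2 (pr2 f) q)) U :=
      contDiffOn_DrOp hU hUpos hpf2 m
    have hL : pr2 (pr2 (DrOp (m + 1) f)) p
        = 2 / p.2 ^ 3 * pr2 (DrOp m f) p - 2 / p.2 ^ 2 * pr2 (pr2 (DrOp m f)) p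
          + 1 / p.2 * pr2 (pr2 (pr2 (DrOp m f))) p := step hU hUpos hg hp
    have hIH := aux f hU hUpos hf m
    have hC : pr2 (pr2 (pr2 (DrOp m f))) p
        = pr2 (DrOp m (fun q => pr2 (pr2 f) q)) p - 2 * (m : ℝ) * pr2 (DrOp (m + 1) f) p := by
      rw [pr2_congr hU hIH hp,
        pr2_sub_const_mul (diffAt_of_contDiffOn hU hDmpf hp) (diffAt_of_contDiffOn hU hDm1 hp)]
    have hB : pr2 (DrOp (m + 1) f) p
        = -(1 / p.2 ^ 2) * pr2 (DrOp m f) p + (1 / p.2) * pr2 (pr2 (DrOp m f)) p :=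
      pr2_div_mul hU hUpos (contDiffOn_pr2 hU hg) hp
    have e1 : DrOp (m + 1 + 1) f p = (1 / p.2) * pr2 (DrOp (m + 1) f) p := rfl
    have e2 : DrOp (m + 1) (fun q => pr2 (pr2 f) q) p
        = (1 / p.2) * pr2 (DrOp m (fun q => pr2 (pr2 f) q)) p := rfl
    rw [hL, hC, e1, e2, hB]
    push_cast
    field_simp
    ring

end Helpers

/-- Lemma 3.1 (i): `∂_r² D_r(m){f} = D_r(m){∂_r² f} − 2m · D_r(m+1){f}`. -/
theorem partial_r_sq_DrOp (f : ℝ × ℝ → ℝ) (U : Set (ℝ × ℝ)) (hU : IsOpen U)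
    (hUpos : U ⊆ {p : ℝ × ℝ | 0 < p.2}) (hf : ContDiffOn ℝ (⊤ : ℕ∞) f U)
    (m : ℕ) (hm : 1 ≤ m) :
    ∀ p ∈ U, pr2 (pr2 (DrOp m f)) p
      = DrOp m (fun q => pr2 (pr2 f) q) p - 2 * (m : ℝ) * DrOp (m + 1) f p := by
  intro p hp
  exact aux f hU hUpos hf m p hp
end
end

section
/- Let f(x₀,r) be a scalar-valued infinitely differentiable function on an open subset of ℝ² (variables x₀ and r, with r > 0). Then for every integer m ≥ 1, D^r(m){∂_r f} = ∂_r D_r(m){f}. -/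
noncomputable section

/-- Lemma 3.1 (iii): `D^r(m){∂_r f} = ∂_r D_r(m){f}`. -/
theorem DRop_partial_r (f : ℝ × ℝ → ℝ) (U : Set (ℝ × ℝ)) (hU : IsOpen U)
    (hUpos : U ⊆ {p : ℝ × ℝ | 0 < p.2}) (hf : ContDiffOn ℝ (⊤ : ℕ∞) f U)
    (m : ℕ) (hm : 1 ≤ m) :
    ∀ p ∈ U, DRop m (fun q => pr2 f q) p = pr2 (DrOp m f) p := by
  clear hm
  induction m with
  | zero => intro p _; rfl
  | succ n ih =>
    intro p hp
    have h : (fun q => DRop n (fun q => pr2 f q) q / q.2)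
        =ᶠ[nhds p] (fun q => (1 / q.2) * pr2 (DrOp n f) q) := by
      filter_upwards [hU.mem_nhds hp] with q hq
      rw [ih q hq]; ring
    show pr2 (fun q => DRop n (fun q => pr2 f q) q / q.2) p
        = pr2 (fun q => (1 / q.2) * pr2 (DrOp n f) q) p
    exact congrArg (fun L : (ℝ × ℝ) →L[ℝ] ℝ => L (0, 1)) h.fderiv_eq
end
end

section
/- (Spherical form of the Dunkl-Dirac operator.) In spherical coordinates r = |x̲| and ω̲ = x̲/|x̲| for x̲ ∈ ℝ^d ∖ {0}, the Dunkl-Dirac operator has the form D̲ = ω̲ (∂_r + (1/r) Γ_ω̲), where Γ_ω̲ = γ_κ + Φ_ω̲ + Ψ, with Φ_ω̲ = −Σ_{i<j} e_i e_j (x_i ∂_{x_j} − x_j ∂_{x_i}) and, for any f ∈ C¹(ℝ^d), Ψ f(x̲) = −Σ_{i<j} e_i e_j Σ_{α̲∈R₊} κ(α̲) [ (f(x̲) − f(σ_α̲ x̲)) / ⟨α̲, x̲⟩ ] (x_i α_j − x_j α_i) − Σ_{α̲∈R₊} κ(α̲) f(σ_α̲ x̲). That is, for every f ∈ C¹(ℝ^d)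 and every x̲ ≠ 0, D̲f(x̲) = ω̲ ( ∂_r f + (1/r) Γ_ω̲ f )(x̲). -/
open scoped BigOperators RealInnerProductSpace

noncomputable section

/-- Euclidean space `ℝ^d`. -/
abbrev Vd (d : ℕ) := EuclideanSpace ℝ (Fin d)

/-- The reflection `σ_a x = x − 2(⟪a,x⟫/|a|²) a` in the hyperplane orthogonal to `a`. -/
def reflect {d : ℕ} (a x : Vd d) : Vd d := x - ((2 * ⟪a, x⟫) / ⟪a, a⟫) • a

/-- A finite root system `R` with a choice of positive subsystem `Rp` and a `W`-invariant
multiplicity function `kap`. -/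
structure DunklData (d : ℕ) where
  R : Finset (Vd d)
  Rp : Finset (Vd d)
  kap : Vd d → ℝ
  zero_not_mem : (0 : Vd d) ∉ R
  inter_line : ∀ a ∈ R, ∀ c : ℝ, c • a ∈ R → c = 1 ∨ c = -1
  reflect_mem : ∀ a ∈ R, ∀ b ∈ R, reflect a b ∈ R
  Rp_subset : Rp ⊆ R
  pos_split : ∀ a ∈ R, Xor' (a ∈ Rp) (-a ∈ Rp)
  kap_nonneg : ∀ a ∈ R, 0 ≤ kap a
  kap_invariant : ∀ a ∈ R, ∀ b ∈ R, kap (reflect a b) = kap b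

/-- The index `γ_κ = Σ_{α ∈ R₊} κ(α)`. -/
def gam {d : ℕ} (S : DunklData d) : ℝ := ∑ a ∈ S.Rp, S.kap a

/-- The Dunkl dimension `μ = 2γ_κ + d`. -/
def dunklDim {d : ℕ} (S : DunklData d) : ℝ := 2 * gam S + d

variable {d : ℕ} {A : Type*} [NormedRing A] [NormedAlgebra ℝ A]

/-- The Clifford algebra relations `e_i e_j + e_j e_i = −2δ_{ij}` for the generators of
`ℝ_{0,d}`, together with linear independence of the basis products `e_A`. -/
def CliffordRel (e : Fin d → A) : Prop :=
  (∀ i j, e i * e j + e j * e i = if i = j then (-2 : A) else 0) ∧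
    LinearIndependent ℝ (fun s : Finset (Fin d) => ((s.sort (· ≤ ·)).map e).prod)

/-- The Clifford vector `x̲ = Σ x_i e_i` associated to `x ∈ ℝ^d`. -/
def vecC (e : Fin d → A) (x : Vd d) : A := ∑ i, x i • e i

/-- The Dunkl difference quotient `(f(x) − f(σ_a x)) / ⟪a, x⟫`, extended by continuity
(for differentiable `f`) across the hyperplane `⟪a, x⟫ = 0`. -/
def dQuot (a : Vd d) (f : Vd d → A) (x : Vd d) : A :=
  if ⟪a, x⟫ = 0 then (2 / ⟪a, a⟫) • fderiv ℝ f x a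
  else (⟪a, x⟫)⁻¹ • (f x - f (reflect a x))

/-- The Dunkl operator `T_{x_i}` on `ℝ^d`. -/
def dunklT (S : DunklData d) (i : Fin d) (f : Vd d → A) (x : Vd d) : A :=
  fderiv ℝ f x (EuclideanSpace.single i 1) + ∑ a ∈ S.Rp, (S.kap a * a i) • dQuot a f x

/-- The Dunkl-Dirac operator `D̲ = Σ e_i T_{x_i}` on `ℝ^d`. -/
def diracD (e : Fin d → A) (S : DunklData d) (f : Vd d → A) (x : Vd d) : A :=
  ∑ i, e i * dunklT S i f x

/-- The angular derivative operator `Φ_ω = −Σ_{i<j} e_i e_j (x_i ∂_{x_j} − x_j ∂_{x_i})`. -/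
def PhiOp (e : Fin d → A) (f : Vd d → A) (x : Vd d) : A :=
  -∑ i, ∑ j ∈ Finset.Ioi i, e i * e j *
    (x i • fderiv ℝ f x (EuclideanSpace.single j 1)
      - x j • fderiv ℝ f x (EuclideanSpace.single i 1))

/-- The difference part `Ψ` of the spherical Dunkl-Gamma operator. -/
def PsiOp (e : Fin d → A) (S : DunklData d) (f : Vd d → A) (x : Vd d) : A :=
  (-∑ i, ∑ j ∈ Finset.Ioi i, e i * e j *
      (∑ a ∈ S.Rp, (S.kap a * (x i * a j - x j * a i)) • dQuot a f x))
    - ∑ a ∈ S.Rp, S.kap a • f (reflect a x)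

/-- The spherical Dunkl-Gamma operator `Γ_ω = γ_κ + Φ_ω + Ψ`. -/
def GammaOp (e : Fin d → A) (S : DunklData d) (f : Vd d → A) (x : Vd d) : A :=
  gam S • f x + PhiOp e f x + PsiOp e S f x

/-- Splitting a square double sum into the diagonal and the paired strict upper triangle. -/
lemma sum_split_aux {n : ℕ} {M : Type*} [AddCommMonoid M] (g : Fin n → Fin n → M) :
    ∑ i, ∑ j, g i j = (∑ i, g i i) + ∑ i, ∑ j ∈ Finset.Ioi i, (g i j + g j i) := by
  have h := Finset.sum_sum_Ioi_add_eq_sum_sum_off_diag (fun a b : Fin n => g b a)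
  rw [h, ← Finset.sum_add_distrib]
  congr 1; ext i
  rw [add_comm, ← Finset.sum_compl_add_sum {i} (fun j => g i j), Finset.sum_singleton]

lemma real_smul_one_eq (r : ℝ) : r • (1 : A) = algebraMap ℝ A r :=
  (Algebra.algebraMap_eq_smul_one r).symm

/-- Proposition 2.1: in spherical coordinates `r = |x̲|`, `ω = x̲/|x̲|`, the Dunkl-Dirac
operator takes the form `D̲ = ω (∂_r + (1/r) Γ_ω)`. -/
theorem diracD_spherical (d : ℕ) (A : Type*) [NormedRing A] [NormedAlgebra ℝ A]
    (e : Fin d → A) (he : CliffordRel e) (S : DunklData d) (hγ : 0 < gam S)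
    (f : Vd d → A) (hf : ContDiff ℝ 1 f) (x : Vd d) (hx : x ≠ 0) :
    diracD e S f x =
      (‖x‖⁻¹ • vecC e x) *
        (fderiv ℝ f x (‖x‖⁻¹ • x) + ‖x‖⁻¹ • GammaOp e S f x) := by
  classical
  obtain ⟨hrel, -⟩ := he
  have hxn : ‖x‖ ≠ 0 := norm_ne_zero_iff.mpr hx
  -- Clifford generator facts
  have hii : ∀ i, e i * e i = -1 := by
    intro i
    have h1 := hrel i i
    rw [if_pos rfl] at h1
    have h2 : (2 : ℝ) • (e i * e i) = (-2 : A) := by rw [two_smul]; exact h1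
    have h3 : e i * e i = (2 : ℝ)⁻¹ • (-2 : A) := by
      rw [← h2, inv_smul_smul₀ (by norm_num)]
    rw [h3, show (-2 : A) = (-2 : ℝ) • (1 : A) by
      rw [real_smul_one_eq, map_neg, map_ofNat], smul_smul]
    norm_num
  have hanti : ∀ i j : Fin d, i ≠ j → e j * e i = -(e i * e j) := by
    intro i j hij
    have h1 := hrel i j
    rw [if_neg hij] at h1
    exact eq_neg_of_add_eq_zero_right h1
  -- the Clifford square of x
  have huu : vecC e x * vecC e x = (-(‖x‖ ^ 2) : ℝ) • (1 : A) := by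
    unfold vecC
    rw [Finset.sum_mul_sum]
    simp only [smul_mul_assoc, mul_smul_comm, smul_smul]
    rw [sum_split_aux (fun i j => (x j * x i) • (e i * e j))]
    have hoff : ∀ i : Fin d, ∀ j ∈ Finset.Ioi i,
        (x j * x i) • (e i * e j) + (x i * x j) • (e j * e i) = 0 := by
      intro i j hj
      have hij : i ≠ j := ne_of_lt (Finset.mem_Ioi.mp hj)
      rw [mul_comm (x i) (x j), ← smul_add, hrel i j, if_neg hij, smul_zero]
    rw [Finset.sum_congr rfl (fun i _ => Finset.sum_congr rfl (hoff i))]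
    simp only [Finset.sum_const_zero, add_zero]
    have hdiag : ∀ i : Fin d, (x i * x i) • (e i * e i) = -((x i * x i) • (1 : A)) := by
      intro i; rw [hii i, smul_neg]
    rw [Finset.sum_congr rfl (fun i _ => hdiag i), Finset.sum_neg_distrib,
      ← Finset.sum_smul]
    have hnorm : ∑ i, x i * x i = ‖x‖ ^ 2 := by
      rw [← real_inner_self_eq_norm_sq]
      simp only [PiLp.inner_apply, RCLike.inner_apply, conj_trivial]
    rw [hnorm, neg_smul]
  -- inner product in coordinates
  have hinner : ∀ a : Vd d, ⟪a, x⟫ = ∑ i, a i * x i := by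
    intro a; simp [PiLp.inner_apply, RCLike.inner_apply]
    exact Finset.sum_congr rfl fun i _ => mul_comm _ _
  -- the basic difference-quotient identity
  have hip : ∀ a : Vd d, ⟪a, x⟫ • dQuot a f x = f x - f (reflect a x) := by
    intro a
    unfold dQuot
    by_cases h : ⟪a, x⟫ = 0
    · rw [if_pos h, h]
      simp [reflect, h]
    · rw [if_neg h, smul_smul, mul_inv_cancel₀ h, one_smul]
  -- Euler identity for the radial derivative
  have hEuler : ∑ i, x i • fderiv ℝ f x (EuclideanSpace.single i 1) = fderiv ℝ f x x := by
    have hxrep : (∑ i, x i • EuclideanSpace.single i (1 : ℝ)) = x := by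
      simpa [EuclideanSpace.basisFun_apply, EuclideanSpace.basisFun_repr] using
        (EuclideanSpace.basisFun (Fin d) ℝ).sum_repr x
    calc ∑ i, x i • fderiv ℝ f x (EuclideanSpace.single i 1)
        = fderiv ℝ f x (∑ i, x i • EuclideanSpace.single i (1 : ℝ)) := by
          rw [map_sum]; simp
      _ = fderiv ℝ f x x := by rw [hxrep]
  -- the radial part of the Dunkl operators
  have hT1 : ∑ i, x i • dunklT S i f x
      = fderiv ℝ f x x + gam S • f x - ∑ a ∈ S.Rp, S.kap a • f (reflect a x) := by
    unfold dunklT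
    simp only [smul_add, Finset.smul_sum, smul_smul]
    rw [Finset.sum_add_distrib, hEuler, Finset.sum_comm]
    have hsum : ∀ a ∈ S.Rp, ∑ i, (x i * (S.kap a * a i)) • dQuot a f x
        = S.kap a • f x - S.kap a • f (reflect a x) := by
      intro a _
      rw [← Finset.sum_smul]
      have hsc : ∑ i, x i * (S.kap a * a i) = S.kap a * ⟪a, x⟫ := by
        rw [hinner a, Finset.mul_sum]
        exact Finset.sum_congr rfl fun i _ => by ring
      rw [hsc, mul_smul, hip a, smul_sub]
    rw [Finset.sum_congr rfl hsum, Finset.sum_sub_distrib, ← Finset.sum_smul]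
    simp only [gam]
    abel
  -- the angular part of the Dunkl operators
  have hoffT : ∀ i j : Fin d, x i • dunklT S j f x - x j • dunklT S i f x
      = (x i • fderiv ℝ f x (EuclideanSpace.single j 1)
          - x j • fderiv ℝ f x (EuclideanSpace.single i 1))
        + ∑ a ∈ S.Rp, (S.kap a * (x i * a j - x j * a i)) • dQuot a f x := by
    intro i j
    unfold dunklT
    simp only [smul_add, Finset.smul_sum, smul_smul]
    have hsum : ∀ a ∈ S.Rp, (S.kap a * (x i * a j - x j * a i)) • dQuot a f x
        = (x i * (S.kap a * a j)) • dQuot a f x - (x j * (S.kap a * a i)) • dQuot a f x := by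
      intro a _
      rw [← sub_smul]
      congr 1
      ring
    rw [Finset.sum_congr rfl hsum, Finset.sum_sub_distrib]
    abel
  -- key identity : x̲ · D̲f = −∂f(x)(x) − Γf
  have key : vecC e x * diracD e S f x = -(fderiv ℝ f x x) - GammaOp e S f x := by
    unfold diracD vecC
    rw [Finset.sum_mul_sum]
    simp only [smul_mul_assoc]
    rw [sum_split_aux (fun i j => x i • (e i * (e j * dunklT S j f x)))]
    have hdiag : ∑ i, x i • (e i * (e i * dunklT S i f x)) = -(∑ i, x i • dunklT S i f x) := by
      rw [← Finset.sum_neg_distrib]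
      refine Finset.sum_congr rfl fun i _ => ?_
      rw [← mul_assoc, hii i, neg_one_mul, smul_neg]
    have hpair : ∀ i : Fin d, ∀ j ∈ Finset.Ioi i,
        x i • (e i * (e j * dunklT S j f x)) + x j • (e j * (e i * dunklT S i f x))
        = e i * e j * (x i • fderiv ℝ f x (EuclideanSpace.single j 1)
            - x j • fderiv ℝ f x (EuclideanSpace.single i 1))
          + e i * e j * (∑ a ∈ S.Rp, (S.kap a * (x i * a j - x j * a i)) • dQuot a f x) := by
      intro i j hj
      have hij : i ≠ j := ne_of_lt (Finset.mem_Ioi.mp hj)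
      have step : x i • (e i * (e j * dunklT S j f x)) + x j • (e j * (e i * dunklT S i f x))
          = e i * e j * (x i • dunklT S j f x - x j • dunklT S i f x) := by
        rw [← mul_assoc, ← mul_assoc, hanti i j hij, neg_mul, smul_neg, mul_sub,
          mul_smul_comm, mul_smul_comm]
        abel
      rw [step, hoffT i j, mul_add]
    rw [hdiag, hT1, Finset.sum_congr rfl (fun i _ => Finset.sum_congr rfl (hpair i))]
    simp only [Finset.sum_add_distrib]
    unfold GammaOp PhiOp PsiOp
    abel
  -- the right-hand side has the same product with x̲
  have keyR : vecC e x * ((‖x‖⁻¹ • vecC e x) *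
        (fderiv ℝ f x (‖x‖⁻¹ • x) + ‖x‖⁻¹ • GammaOp e S f x))
      = -(fderiv ℝ f x x) - GammaOp e S f x := by
    rw [smul_mul_assoc, mul_smul_comm, ← mul_assoc, huu, smul_mul_assoc, one_mul, smul_smul]
    have hc : ‖x‖⁻¹ * -(‖x‖ ^ 2) = -‖x‖ := by
      field_simp
    rw [hc, (fderiv ℝ f x).map_smul, smul_add, smul_smul, smul_smul]
    have h1 : -‖x‖ * ‖x‖⁻¹ = -1 := by field_simp
    rw [h1, neg_one_smul, neg_one_smul, sub_eq_add_neg]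
  -- conclude by left-cancelling x̲
  have hmain := key.trans keyR.symm
  have h2 : vecC e x * (vecC e x * diracD e S f x)
      = vecC e x * (vecC e x * ((‖x‖⁻¹ • vecC e x) *
          (fderiv ℝ f x (‖x‖⁻¹ • x) + ‖x‖⁻¹ • GammaOp e S f x))) := by rw [hmain]
  rw [← mul_assoc, ← mul_assoc, huu, smul_mul_assoc, smul_mul_assoc, one_mul, one_mul] at h2
  have hc0 : (-(‖x‖ ^ 2) : ℝ) ≠ 0 := neg_ne_zero.mpr (pow_ne_zero 2 hxn)
  have h3 := congrArg (fun z => (-(‖x‖ ^ 2) : ℝ)⁻¹ • z) h2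
  simp only [inv_smul_smul₀ hc0] at h3
  exact h3
end
end

section
/- Let Γ_ω̲ = γ_κ + Φ_ω̲ + Ψ be the spherical Dunkl-Gamma operator. Then: (i) if f(x̲) = f(|x̲|) is a radial C¹ function, then Γ_ω̲ f = 0; (ii) if P_n is a homogeneous Dunkl-monogenic function of degree n, then Γ_ω̲ P_n(ω̲) = −n P_n(ω̲); (iii) under the same hypothesis, Γ_ω̲ (ω̲ P_n(ω̲)) = (μ + n − 1) ω̲ P_n(ω̲), where μ = 2γ_κ + d. -/
open scoped BigOperators RealInnerProductSpace

noncomputable section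

variable {d : ℕ} {A : Type*} [NormedRing A] [NormedAlgebra ℝ A]

-- ===== auxiliary lemmas =====
open Finset in
theorem aux_sum_split {M : Type*} [AddCommMonoid M] {d : ℕ} (g : Fin d → Fin d → M) :
    ∑ i, ∑ j, g i j = ∑ i, g i i + ∑ i, ∑ j ∈ Finset.Ioi i, (g i j + g j i) := by
  have swap : ∑ i, ∑ j ∈ Finset.Iio i, g i j = ∑ i, ∑ j ∈ Finset.Ioi i, g j i := by
    rw [Finset.sum_sigma', Finset.sum_sigma']
    refine Finset.sum_nbij' (fun x => ⟨x.2, x.1⟩) (fun x => ⟨x.2, x.1⟩) ?_ ?_ (fun _ _ => rfl)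
      (fun _ _ => rfl) (fun _ _ => rfl) <;>
    · rintro ⟨a, b⟩ h
      simp only [Finset.mem_sigma, Finset.mem_univ, Finset.mem_Iio, Finset.mem_Ioi, true_and] at *
      exact h
  have huniv : ∀ i : Fin d, ∑ j, g i j = (∑ j ∈ Finset.Iio i, g i j) + g i i
      + ∑ j ∈ Finset.Ioi i, g i j := by
    intro i
    have hu : (Finset.univ : Finset (Fin d)) = (Finset.Iio i ∪ {i}) ∪ Finset.Ioi i := by
      ext j
      simp only [Finset.mem_univ, Finset.mem_union, Finset.mem_Iio, Finset.mem_Ioi,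
        Finset.mem_singleton, true_iff]
      rcases lt_trichotomy j i with h | h | h
      · exact Or.inl (Or.inl h)
      · exact Or.inl (Or.inr h)
      · exact Or.inr h
    have d1 : Disjoint (Finset.Iio i) ({i} : Finset (Fin d)) := by
      simp [Finset.disjoint_singleton_right]
    have d2 : Disjoint (Finset.Iio i ∪ {i}) (Finset.Ioi i) := by
      rw [Finset.disjoint_left]
      intro j hj hj'
      simp only [Finset.mem_union, Finset.mem_Iio, Finset.mem_singleton] at hj
      simp only [Finset.mem_Ioi] at hj'
      rcases hj with h | h
      · exact absurd (h.trans hj') (lt_irrefl _)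
      · exact absurd (h ▸ hj') (lt_irrefl _)
    rw [hu, Finset.sum_union d2, Finset.sum_union d1, Finset.sum_singleton]
  calc ∑ i, ∑ j, g i j = ∑ i, ((∑ j ∈ Finset.Iio i, g i j) + g i i + ∑ j ∈ Finset.Ioi i, g i j) :=
        Finset.sum_congr rfl fun i _ => huniv i
    _ = (∑ i, ∑ j ∈ Finset.Iio i, g i j) + ∑ i, g i i + ∑ i, ∑ j ∈ Finset.Ioi i, g i j := by
        rw [Finset.sum_add_distrib, Finset.sum_add_distrib]
    _ = _ := by
        rw [swap]
        rw [show ∑ i, ∑ j ∈ Finset.Ioi i, (g i j + g j i)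
            = (∑ i, ∑ j ∈ Finset.Ioi i, g i j) + ∑ i, ∑ j ∈ Finset.Ioi i, g j i by
          rw [← Finset.sum_add_distrib]
          exact Finset.sum_congr rfl fun i _ => Finset.sum_add_distrib]
        abel

theorem aux_inner_sum {d : ℕ} (a x : Vd d) : ⟪a, x⟫ = ∑ i, a i * x i := by
  simp [PiLp.inner_apply, RCLike.inner_apply, conj_trivial]
  exact Finset.sum_congr rfl fun i _ => mul_comm _ _

theorem aux_decomp {d : ℕ} (x : Vd d) : x = ∑ i, x i • EuclideanSpace.single i (1:ℝ) := by
  have h := (EuclideanSpace.basisFun (Fin d) ℝ).sum_repr x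
  simp only [EuclideanSpace.basisFun_apply, EuclideanSpace.basisFun_repr] at h
  exact h.symm

theorem aux_fderiv_x {d : ℕ} {A : Type*} [NormedRing A] [NormedAlgebra ℝ A]
    (f : Vd d → A) (x : Vd d) :
    fderiv ℝ f x x = ∑ i, x i • fderiv ℝ f x (EuclideanSpace.single i 1) := by
  calc fderiv ℝ f x x = fderiv ℝ f x (∑ i, x i • EuclideanSpace.single i (1:ℝ)) := by
        rw [← aux_decomp]
    _ = _ := by
        rw [map_sum]
        exact Finset.sum_congr rfl fun i _ => (fderiv ℝ f x).map_smul _ _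

section cliff
variable {d : ℕ} {A : Type*} [NormedRing A] [NormedAlgebra ℝ A] {e : Fin d → A}
  (hrel : ∀ i j, e i * e j + e j * e i = if i = j then (-2 : A) else 0)

theorem aux_two_cancel {u v : A} (h : u + u = v + v) : u = v := by
  have h2 : (2:ℝ) • u = (2:ℝ) • v := by rw [two_smul, two_smul]; exact h
  exact smul_right_injective A two_ne_zero h2

include hrel

theorem aux_esq (i : Fin d) : e i * e i = -1 := by
  have h := hrel i i
  simp only [if_pos rfl] at h
  exact aux_two_cancel (by rw [h]; norm_num)

theorem aux_anticomm {i j : Fin d} (hij : i ≠ j) : e j * e i = -(e i * e j) := by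
  have h := hrel i j
  rw [if_neg hij] at h
  exact eq_neg_of_add_eq_zero_right h

theorem aux_single_anti (j : Fin d) (x : Vd d) :
    e j * vecC e x = -(vecC e x * e j) - (2 * x j) • (1:A) := by
  have key : e j * vecC e x + vecC e x * e j = (2 * x j) • (-1:A) := by
    simp only [vecC, Finset.mul_sum, Finset.sum_mul, mul_smul_comm, smul_mul_assoc]
    rw [← Finset.sum_add_distrib]
    have : ∀ i : Fin d, x i • (e j * e i) + x i • (e i * e j)
        = x i • (if i = j then (-2:A) else 0) := by
      intro i
      rw [← smul_add, add_comm (e j * e i), hrel i j]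
    rw [Finset.sum_congr rfl fun i _ => by rw [this i, smul_ite, smul_zero]]
    rw [Finset.sum_ite_eq' Finset.univ j (fun i => x i • (-2:A))]
    simp only [Finset.mem_univ, if_pos]
    rw [show (-2 : A) = (2:ℝ) • (-1:A) by rw [smul_neg, Algebra.smul_def, map_ofNat, mul_one],
      smul_smul, mul_comm]
  rw [eq_sub_of_add_eq key, smul_neg]
  abel
end cliff
section vec
variable {d : ℕ} {A : Type*} [NormedRing A] [NormedAlgebra ℝ A] {e : Fin d → A}

theorem aux_vecC_sub_smul (x a : Vd d) (r : ℝ) :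
    vecC e (x - r • a) = vecC e x - r • vecC e a := by
  simp only [vecC, Finset.smul_sum]
  rw [← Finset.sum_sub_distrib]
  refine Finset.sum_congr rfl fun i _ => ?_
  have : (x - r • a) i = x i - r * a i := rfl
  rw [this, sub_smul, smul_smul]

theorem aux_vecC_smul (c : ℝ) (x : Vd d) : vecC e (c • x) = c • vecC e x := by
  simp only [vecC, Finset.smul_sum]
  refine Finset.sum_congr rfl fun i _ => ?_
  have : (c • x) i = c * x i := rfl
  rw [this, smul_smul]

variable (hrel : ∀ i j, e i * e j + e j * e i = if i = j then (-2 : A) else 0)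
include hrel

theorem aux_vec_anti (a x : Vd d) :
    vecC e a * vecC e x = -(vecC e x * vecC e a) - (2 * ⟪a, x⟫) • (1:A) := by
  have key : ∀ j, (a j) • (e j * vecC e x)
      = (a j) • (-(vecC e x * e j) - (2 * x j) • (1:A)) := fun j => by
    rw [aux_single_anti hrel j x]
  have expand : vecC e a * vecC e x = ∑ j, (a j) • (e j * vecC e x) := by
    rw [vecC, Finset.sum_mul]
    exact Finset.sum_congr rfl fun j _ => smul_mul_assoc _ _ _
  rw [expand, Finset.sum_congr rfl fun j _ => key j]
  have expand2 : ∑ j, (a j) • (-(vecC e x * e j) - (2 * x j) • (1:A))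
      = -(∑ j, (a j) • (vecC e x * e j)) - ∑ j, (a j * (2 * x j)) • (1:A) := by
    simp only [smul_sub, smul_neg, smul_smul]
    rw [Finset.sum_sub_distrib, ← Finset.sum_neg_distrib]
  rw [expand2]
  have h1 : ∑ j, (a j) • (vecC e x * e j) = vecC e x * vecC e a := by
    conv_rhs => rw [show vecC e a = ∑ j, a j • e j from rfl]
    rw [Finset.mul_sum]
    exact Finset.sum_congr rfl fun j _ => (mul_smul_comm _ _ _).symm
  have h2 : ∑ j, (a j * (2 * x j)) • (1:A) = (2 * ⟪a, x⟫) • (1:A) := by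
    rw [← Finset.sum_smul]
    congr 1
    rw [aux_inner_sum, Finset.mul_sum]
    exact Finset.sum_congr rfl fun j _ => by ring
  rw [h1, h2]

theorem aux_vec_sq (a : Vd d) : vecC e a * vecC e a = (-⟪a, a⟫) • (1:A) := by
  have h := aux_vec_anti hrel a a
  have hsum : vecC e a * vecC e a + vecC e a * vecC e a = -((2 * ⟪a,a⟫) • (1:A)) := by
    nth_rewrite 1 [h]
    abel
  have h2 : vecC e a * vecC e a + vecC e a * vecC e a
      = (-⟪a,a⟫) • (1:A) + (-⟪a,a⟫) • (1:A) := by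
    rw [hsum, ← add_smul, ← neg_smul]
    congr 1
    ring
  exact aux_two_cancel h2
end vec

section refl
variable {d : ℕ}

theorem aux_reflect_of_inner_zero {a x : Vd d} (h : ⟪a, x⟫ = 0) : reflect a x = x := by
  rw [reflect, h]
  simp

theorem aux_norm_reflect (a x : Vd d) : ‖reflect a x‖ = ‖x‖ := by
  by_cases ha : a = 0
  · rw [ha, reflect]
    simp
  have hinner : ⟪reflect a x, reflect a x⟫ = ⟪x, x⟫ := by
    rw [reflect]
    set t : ℝ := 2 * ⟪a, x⟫ / ⟪a, a⟫ with ht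
    rw [inner_sub_sub_self]
    simp only [real_inner_smul_left, real_inner_smul_right]
    have haa : ⟪a, a⟫ ≠ 0 := fun h0 => ha (inner_self_eq_zero.mp h0)
    have key : t * ⟪a, a⟫ = 2 * ⟪a, x⟫ := by rw [ht, div_mul_cancel₀ _ haa]
    rw [show t * (t * ⟪a, a⟫) = t * (2 * ⟪a, x⟫) by rw [← key],
      real_inner_comm x a]
    ring
  have h1 : ‖reflect a x‖ ^ 2 = ‖x‖ ^ 2 := by
    rw [← real_inner_self_eq_norm_sq, ← real_inner_self_eq_norm_sq, hinner]
  rw [← Real.sqrt_sq (norm_nonneg (reflect a x)), ← Real.sqrt_sq (norm_nonneg x), h1]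

theorem aux_smul_dQuot {A : Type*} [NormedRing A] [NormedAlgebra ℝ A]
    (a : Vd d) (f : Vd d → A) (x : Vd d) :
    ⟪a, x⟫ • dQuot a f x = f x - f (reflect a x) := by
  rw [dQuot]
  by_cases h : ⟪a, x⟫ = 0
  · rw [if_pos h, h, zero_smul, aux_reflect_of_inner_zero h, sub_self]
  · rw [if_neg h, smul_smul, mul_inv_cancel₀ h, one_smul]

theorem aux_Rp_inner_pos (S : DunklData d) {a : Vd d} (ha : a ∈ S.Rp) : (0:ℝ) < ⟪a, a⟫ := by
  have hR : a ∈ S.R := S.Rp_subset ha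
  have hne : a ≠ 0 := fun h => S.zero_not_mem (h ▸ hR)
  rw [real_inner_self_eq_norm_sq]
  exact pow_pos (norm_pos_iff.mpr hne) 2
end refl
section master
variable {d : ℕ} {A : Type*} [NormedRing A] [NormedAlgebra ℝ A] {e : Fin d → A}

theorem aux_master (hrel : ∀ i j, e i * e j + e j * e i = if i = j then (-2 : A) else 0)
    (S : DunklData d) (f : Vd d → A) (x : Vd d) :
    vecC e x * diracD e S f x = -(fderiv ℝ f x x) - GammaOp e S f x := by
  have step1 : vecC e x * diracD e S f x
      = ∑ i, ∑ j, x i • (e i * (e j * dunklT S j f x)) := by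
    rw [diracD, show vecC e x = ∑ i, x i • e i from rfl, Finset.sum_mul]
    refine Finset.sum_congr rfl fun i _ => ?_
    rw [Finset.mul_sum]
    refine Finset.sum_congr rfl fun j _ => ?_
    rw [smul_mul_assoc]
  rw [step1, aux_sum_split (fun i j => x i • (e i * (e j * dunklT S j f x)))]
  -- diagonal part
  have diag : ∑ i, x i • (e i * (e i * dunklT S i f x)) = -(∑ i, x i • dunklT S i f x) := by
    rw [← Finset.sum_neg_distrib]
    refine Finset.sum_congr rfl fun i _ => ?_
    rw [← mul_assoc, aux_esq hrel, neg_one_mul, smul_neg]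
  have sumxT : ∑ i, x i • dunklT S i f x
      = fderiv ℝ f x x + (gam S • f x - ∑ a ∈ S.Rp, S.kap a • f (reflect a x)) := by
    simp only [dunklT, smul_add]
    rw [Finset.sum_add_distrib]
    congr 1
    · exact (aux_fderiv_x f x).symm
    · have h1 : ∀ i : Fin d, x i • ∑ a ∈ S.Rp, (S.kap a * a i) • dQuot a f x
          = ∑ a ∈ S.Rp, (x i * (S.kap a * a i)) • dQuot a f x := fun i => by
        rw [Finset.smul_sum]
        exact Finset.sum_congr rfl fun a _ => smul_smul _ _ _
      rw [Finset.sum_congr rfl fun i _ => h1 i, Finset.sum_comm]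
      have h2 : ∀ a ∈ S.Rp, ∑ i, (x i * (S.kap a * a i)) • dQuot a f x
          = S.kap a • f x - S.kap a • f (reflect a x) := fun a _ => by
        rw [← Finset.sum_smul,
          show (∑ i, x i * (S.kap a * a i)) = S.kap a * ⟪a, x⟫ by
            rw [aux_inner_sum, Finset.mul_sum]
            exact Finset.sum_congr rfl fun i _ => by ring,
          mul_smul, aux_smul_dQuot, smul_sub]
      rw [Finset.sum_congr rfl h2, Finset.sum_sub_distrib, ← Finset.sum_smul]
      rfl
  -- off-diagonal part
  have pair : ∀ i j : Fin d, i < j →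
      x i • (e i * (e j * dunklT S j f x)) + x j • (e j * (e i * dunklT S i f x))
        = e i * e j * (x i • dunklT S j f x - x j • dunklT S i f x) := by
    intro i j hij
    rw [← mul_assoc, ← mul_assoc, aux_anticomm hrel (ne_of_lt hij), neg_mul, smul_neg,
      mul_sub, mul_smul_comm, mul_smul_comm, sub_eq_add_neg]
  have inner_exp : ∀ i j : Fin d,
      x i • dunklT S j f x - x j • dunklT S i f x
        = (x i • fderiv ℝ f x (EuclideanSpace.single j 1)
            - x j • fderiv ℝ f x (EuclideanSpace.single i 1))
          + ∑ a ∈ S.Rp, (S.kap a * (x i * a j - x j * a i)) • dQuot a f x := by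
    intro i j
    simp only [dunklT, smul_add, Finset.smul_sum, smul_smul]
    rw [show ∀ p q r s : A, p + q - (r + s) = (p - r) + (q - s) from fun p q r s => by abel]
    congr 1
    rw [← Finset.sum_sub_distrib]
    refine Finset.sum_congr rfl fun a _ => ?_
    rw [← sub_smul]
    congr 1
    ring
  have offd : ∑ i, ∑ j ∈ Finset.Ioi i,
      (x i • (e i * (e j * dunklT S j f x)) + x j • (e j * (e i * dunklT S i f x)))
        = -PhiOp e f x + (-(PsiOp e S f x) - ∑ a ∈ S.Rp, S.kap a • f (reflect a x)) := by
    have hsum : ∀ i : Fin d, ∀ j ∈ Finset.Ioi i,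
        x i • (e i * (e j * dunklT S j f x)) + x j • (e j * (e i * dunklT S i f x))
          = e i * e j * (x i • fderiv ℝ f x (EuclideanSpace.single j 1)
              - x j • fderiv ℝ f x (EuclideanSpace.single i 1))
            + e i * e j * (∑ a ∈ S.Rp, (S.kap a * (x i * a j - x j * a i)) • dQuot a f x) := by
      intro i j hj
      rw [pair i j (Finset.mem_Ioi.mp hj), inner_exp i j, mul_add]
    rw [Finset.sum_congr rfl fun i _ => Finset.sum_congr rfl (hsum i)]
    rw [Finset.sum_congr rfl fun i (_ : i ∈ Finset.univ) => Finset.sum_add_distrib,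
      Finset.sum_add_distrib]
    congr 1
    · rw [PhiOp, neg_neg]
    · rw [PsiOp]
      abel
  rw [Finset.sum_congr rfl fun i (_ : i ∈ Finset.univ) =>
    Finset.sum_congr rfl fun j (hj : j ∈ Finset.Ioi i) => rfl]
  rw [diag, sumxT, offd, GammaOp]
  abel
end master
section euler
variable {d : ℕ} {A : Type*} [NormedRing A] [NormedAlgebra ℝ A]

theorem aux_euler {P : Vd d → A} {x : Vd d} {n : ℝ} (hP : DifferentiableAt ℝ P x)
    (hhom : ∀ c : ℝ, 0 < c → ∀ y : Vd d, P (c • y) = (c ^ n) • P y) :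
    fderiv ℝ P x x = n • P x := by
  have hc : HasDerivAt (fun c : ℝ => c • x) x 1 := by
    simpa using (hasDerivAt_id (1:ℝ)).smul_const x
  have hP' : HasFDerivAt P (fderiv ℝ P x) ((fun c : ℝ => c • x) 1) := by
    simpa using hP.hasFDerivAt
  have h1 : HasDerivAt (fun c : ℝ => P (c • x)) (fderiv ℝ P x x) 1 :=
    hP'.comp_hasDerivAt 1 hc
  have h2 : HasDerivAt (fun c : ℝ => (c ^ n) • P x) (n • P x) 1 := by
    have := (Real.hasDerivAt_rpow_const (x := (1:ℝ)) (p := n)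
      (Or.inl one_ne_zero)).smul_const (P x)
    simpa using this
  have heq : (fun c : ℝ => P (c • x)) =ᶠ[nhds 1] (fun c : ℝ => (c ^ n) • P x) := by
    filter_upwards [eventually_gt_nhds (by norm_num : (0:ℝ) < 1)] with c hc0
    exact hhom c hc0 x
  exact h1.unique ((heq.hasDerivAt_iff).mpr h2)

theorem aux_radial_fderiv {f : Vd d → A} {x : Vd d}
    (hrad : ∀ x y : Vd d, ‖x‖ = ‖y‖ → f x = f y)
    (hdf : DifferentiableAt ℝ f x) (hx : x ≠ 0) :
    ∃ c : A, ∀ v : Vd d, fderiv ℝ f x v = ⟪x, v⟫ • c := by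
  have hnx : ‖x‖ ≠ 0 := norm_ne_zero_iff.mpr hx
  -- orthogonal directions have zero derivative
  have horth : ∀ w : Vd d, ⟪x, w⟫ = 0 → fderiv ℝ f x w = 0 := by
    intro w hw
    have hline : ∀ t : ℝ, HasDerivAt (fun s : ℝ => x + s • w) w t := by
      intro t
      simpa using ((hasDerivAt_id t).smul_const w).const_add x
    -- the curve m t = (‖x + t w‖ / ‖x‖) • x
    have hnorm_sq : ∀ t : ℝ, ‖x + t • w‖ = Real.sqrt (‖x‖^2 + t^2 * ‖w‖^2) := by
      intro t
      rw [← Real.sqrt_sq (norm_nonneg (x + t • w))]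
      congr 1
      rw [← real_inner_self_eq_norm_sq]
      rw [inner_add_add_self]
      simp only [real_inner_smul_left, real_inner_smul_right]
      have hw' : ⟪w, x⟫ = 0 := by rw [real_inner_comm]; exact hw
      rw [hw', real_inner_self_eq_norm_sq, real_inner_self_eq_norm_sq, hw]
      ring
    have hg : HasDerivAt (fun t : ℝ => ‖x + t • w‖) 0 0 := by
      have hq : HasDerivAt (fun t : ℝ => ‖x‖^2 + t^2 * ‖w‖^2) 0 0 := by
        have h0 := ((hasDerivAt_pow 2 (0:ℝ)).mul_const (‖w‖^2)).const_add (‖x‖^2)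
        simpa using h0
      have hsq : HasDerivAt (fun t : ℝ => Real.sqrt (‖x‖^2 + t^2 * ‖w‖^2))
          (0 / (2 * Real.sqrt (‖x‖^2 + 0^2 * ‖w‖^2))) 0 := by
        refine hq.sqrt ?_
        simpa using pow_ne_zero 2 hnx
      rw [show (0 : ℝ) / (2 * Real.sqrt (‖x‖^2 + 0^2 * ‖w‖^2)) = 0 by simp] at hsq
      refine hsq.congr_of_eventuallyEq ?_
      filter_upwards with t
      exact hnorm_sq t
    have hm : HasDerivAt (fun t : ℝ => (‖x + t • w‖ / ‖x‖) • x) 0 0 := by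
      have h1 : HasDerivAt (fun t : ℝ => ‖x + t • w‖ / ‖x‖) (0 / ‖x‖) 0 := hg.div_const ‖x‖
      have h2 := h1.smul_const x
      simpa using h2
    have hm0 : (fun t : ℝ => (‖x + t • w‖ / ‖x‖) • x) 0 = x := by
      simp [div_self hnx]
    have hf' : HasFDerivAt f (fderiv ℝ f x) ((fun t : ℝ => (‖x + t • w‖ / ‖x‖) • x) 0) := by
      rw [hm0]; exact hdf.hasFDerivAt
    have hcomp : HasDerivAt (fun t : ℝ => f ((‖x + t • w‖ / ‖x‖) • x)) (fderiv ℝ f x 0) 0 :=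
      hf'.comp_hasDerivAt 0 hm
    rw [map_zero] at hcomp
    have hfeq : (fun t : ℝ => f ((‖x + t • w‖ / ‖x‖) • x)) = (fun t : ℝ => f (x + t • w)) := by
      funext t
      refine hrad _ _ ?_
      rw [norm_smul]
      rw [Real.norm_eq_abs, abs_of_nonneg (by positivity), div_mul_cancel₀ _ hnx]
    rw [hfeq] at hcomp
    have hf2 : HasFDerivAt f (fderiv ℝ f x) ((fun t : ℝ => x + t • w) 0) := by
      simpa using hdf.hasFDerivAt
    have hcomp2 : HasDerivAt (fun t : ℝ => f (x + t • w)) (fderiv ℝ f x w) 0 :=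
      hf2.comp_hasDerivAt 0 (hline 0)
    exact (hcomp2.unique hcomp)
  refine ⟨(‖x‖^2)⁻¹ • fderiv ℝ f x x, fun v => ?_⟩
  have hw : ⟪x, v - (⟪x, v⟫ / ‖x‖^2) • x⟫ = 0 := by
    rw [inner_sub_right, real_inner_smul_right, real_inner_self_eq_norm_sq]
    field_simp
    ring
  have hsplit : v = (v - (⟪x, v⟫ / ‖x‖^2) • x) + (⟪x, v⟫ / ‖x‖^2) • x := by abel
  calc fderiv ℝ f x v
      = fderiv ℝ f x ((v - (⟪x, v⟫ / ‖x‖^2) • x) + (⟪x, v⟫ / ‖x‖^2) • x) := by rw [← hsplit]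
    _ = fderiv ℝ f x (v - (⟪x, v⟫ / ‖x‖^2) • x) + (⟪x, v⟫ / ‖x‖^2) • fderiv ℝ f x x := by
        rw [map_add, map_smul]
    _ = (⟪x, v⟫ / ‖x‖^2) • fderiv ℝ f x x := by rw [horth _ hw, zero_add]
    _ = ⟪x, v⟫ • ((‖x‖^2)⁻¹ • fderiv ℝ f x x) := by rw [smul_smul, div_eq_mul_inv]
end euler
section xP
variable {d : ℕ} {A : Type*} [NormedRing A] [NormedAlgebra ℝ A]

/-- `vecC e` as a continuous linear map. -/
def vecCL (e : Fin d → A) : Vd d →L[ℝ] A :=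
  ∑ i, (EuclideanSpace.proj i : Vd d →L[ℝ] ℝ).smulRight (e i)

theorem vecCL_apply (e : Fin d → A) (v : Vd d) : vecCL e v = vecC e v := by
  simp [vecCL, vecC, ContinuousLinearMap.sum_apply]

theorem aux_diff_vecC (e : Fin d → A) (x : Vd d) :
    DifferentiableAt ℝ (fun y : Vd d => vecC e y) x := by
  have : (fun y : Vd d => vecC e y) = fun y => vecCL e y := by
    funext y; rw [vecCL_apply]
  rw [this]
  exact (vecCL e).differentiableAt

theorem aux_fderiv_vecC (e : Fin d → A) (x v : Vd d) :
    fderiv ℝ (fun y : Vd d => vecC e y) x v = vecC e v := by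
  have : (fun y : Vd d => vecC e y) = fun y => vecCL e y := by
    funext y; rw [vecCL_apply]
  rw [this, (vecCL e).fderiv, vecCL_apply]

theorem aux_fderiv_xP (e : Fin d → A) {P : Vd d → A} {x : Vd d}
    (hP : DifferentiableAt ℝ P x) (v : Vd d) :
    fderiv ℝ (fun y => vecC e y * P y) x v = vecC e v * P x + vecC e x * fderiv ℝ P x v := by
  rw [fderiv_fun_mul' (aux_diff_vecC e x) hP]
  simp only [ContinuousLinearMap.add_apply, ContinuousLinearMap.smul_apply,
    ContinuousLinearMap.smulRight_apply, smul_eq_mul, op_smul_eq_mul]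
  rw [aux_fderiv_vecC]
  exact add_comm _ _

theorem aux_dQuot_xP (e : Fin d → A) {P : Vd d → A} {x : Vd d} {a : Vd d}
    (hP : DifferentiableAt ℝ P x) (ha : ⟪a, a⟫ ≠ 0) :
    dQuot a (fun y => vecC e y * P y) x
      = vecC e x * dQuot a P x + (2 / ⟪a, a⟫) • (vecC e a * P (reflect a x)) := by
  by_cases h : ⟪a, x⟫ = 0
  · rw [dQuot, dQuot, if_pos h, if_pos h, aux_fderiv_xP e hP a,
      aux_reflect_of_inner_zero h, smul_add, mul_smul_comm, add_comm]
  · rw [dQuot, dQuot, if_neg h, if_neg h]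
    have hvec : vecC e (reflect a x) = vecC e x - (2 * ⟪a, x⟫ / ⟪a, a⟫) • vecC e a := by
      rw [reflect, aux_vecC_sub_smul]
    rw [hvec]
    have expand : vecC e x * P x - (vecC e x - (2 * ⟪a, x⟫ / ⟪a, a⟫) • vecC e a) * P (reflect a x)
        = vecC e x * (P x - P (reflect a x))
          + (2 * ⟪a, x⟫ / ⟪a, a⟫) • (vecC e a * P (reflect a x)) := by
      rw [sub_mul, smul_mul_assoc, mul_sub]
      abel
    rw [expand, smul_add, mul_smul_comm, smul_smul]
    congr 2
    rw [show (2:ℝ) * ⟪a,x⟫ / ⟪a,a⟫ = ⟪a,x⟫ * (2 / ⟪a,a⟫) by ring, ← mul_assoc,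
      inv_mul_cancel₀ h, one_mul]
end xP
section diracxP
variable {d : ℕ} {A : Type*} [NormedRing A] [NormedAlgebra ℝ A] {e : Fin d → A}

theorem aux_vecC_single (e : Fin d → A) (j : Fin d) :
    vecC e (EuclideanSpace.single j (1:ℝ)) = e j := by
  rw [vecC]
  rw [Finset.sum_congr rfl fun i (_ : i ∈ Finset.univ) => by
    rw [show (EuclideanSpace.single j (1:ℝ)) i = if i = j then 1 else 0 from
      EuclideanSpace.single_apply j 1 i, ite_smul, one_smul, zero_smul]]
  rw [Finset.sum_ite_eq' Finset.univ j e]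
  simp

theorem aux_diracD_eq (S : DunklData d) (P : Vd d → A) (x : Vd d) :
    diracD e S P x = (∑ j, e j * fderiv ℝ P x (EuclideanSpace.single j 1))
      + ∑ a ∈ S.Rp, S.kap a • (vecC e a * dQuot a P x) := by
  rw [diracD]
  simp only [dunklT, mul_add, Finset.mul_sum, mul_smul_comm]
  rw [Finset.sum_add_distrib]
  congr 1
  rw [Finset.sum_comm]
  refine Finset.sum_congr rfl fun a _ => ?_
  rw [show vecC e a * dQuot a P x = ∑ j, a j • (e j * dQuot a P x) from by
    rw [vecC, Finset.sum_mul]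
    exact Finset.sum_congr rfl fun j _ => smul_mul_assoc _ _ _]
  rw [Finset.smul_sum]
  exact Finset.sum_congr rfl fun j _ => by rw [smul_smul]

theorem aux_dirac_xP (hrel : ∀ i j, e i * e j + e j * e i = if i = j then (-2 : A) else 0)
    (S : DunklData d) {P : Vd d → A} {x : Vd d} (hP : DifferentiableAt ℝ P x) :
    diracD e S (fun y => vecC e y * P y) x
      = -((((d:ℝ)) + 2 * gam S) • P x) - (2:ℝ) • fderiv ℝ P x x
        - vecC e x * diracD e S P x := by
  have hT : ∀ j, dunklT S j (fun y => vecC e y * P y) x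
      = (e j * P x + vecC e x * fderiv ℝ P x (EuclideanSpace.single j 1))
        + ∑ a ∈ S.Rp, (S.kap a * a j) •
            (vecC e x * dQuot a P x + (2 / ⟪a, a⟫) • (vecC e a * P (reflect a x))) := by
    intro j
    rw [dunklT, aux_fderiv_xP e hP, aux_vecC_single]
    congr 1
    exact Finset.sum_congr rfl fun a ha => by
      rw [aux_dQuot_xP e hP (ne_of_gt (aux_Rp_inner_pos S ha))]
  have expand : diracD e S (fun y => vecC e y * P y) x
      = (∑ j, e j * (e j * P x))
        + (∑ j, e j * (vecC e x * fderiv ℝ P x (EuclideanSpace.single j 1)))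
        + ∑ j, e j * (∑ a ∈ S.Rp, (S.kap a * a j) •
            (vecC e x * dQuot a P x + (2 / ⟪a, a⟫) • (vecC e a * P (reflect a x)))) := by
    rw [diracD, Finset.sum_congr rfl fun j (_ : j ∈ Finset.univ) => by
      rw [hT j, mul_add, mul_add]]
    rw [Finset.sum_add_distrib, Finset.sum_add_distrib]
  rw [expand]
  -- first sum
  have hS1 : ∑ j : Fin d, e j * (e j * P x) = -((d:ℝ) • P x) := by
    rw [Finset.sum_congr rfl fun j (_ : j ∈ Finset.univ) => by
      rw [← mul_assoc, aux_esq hrel, neg_one_mul]]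
    rw [Finset.sum_const, Finset.card_univ, Fintype.card_fin]
    module
  -- second sum
  have hS2 : ∑ j, e j * (vecC e x * fderiv ℝ P x (EuclideanSpace.single j 1))
      = -(vecC e x * ∑ j, e j * fderiv ℝ P x (EuclideanSpace.single j 1))
        - (2:ℝ) • fderiv ℝ P x x := by
    have hterm : ∀ j : Fin d, e j * (vecC e x * fderiv ℝ P x (EuclideanSpace.single j 1))
        = -(vecC e x * (e j * fderiv ℝ P x (EuclideanSpace.single j 1)))
          - (2:ℝ) • (x j • fderiv ℝ P x (EuclideanSpace.single j 1)) := by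
      intro j
      rw [← mul_assoc, aux_single_anti hrel j x, sub_mul, neg_mul, mul_assoc,
        smul_mul_assoc, one_mul]
      module
    rw [Finset.sum_congr rfl fun j _ => hterm j, Finset.sum_sub_distrib,
      Finset.sum_neg_distrib, ← Finset.mul_sum, ← Finset.smul_sum, ← aux_fderiv_x]
  -- third sum
  have hS3 : ∑ j, e j * (∑ a ∈ S.Rp, (S.kap a * a j) •
        (vecC e x * dQuot a P x + (2 / ⟪a, a⟫) • (vecC e a * P (reflect a x))))
      = -(vecC e x * ∑ a ∈ S.Rp, S.kap a • (vecC e a * dQuot a P x))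
        - (2:ℝ) • (gam S • P x) := by
    have swap : ∑ j, e j * (∑ a ∈ S.Rp, (S.kap a * a j) •
          (vecC e x * dQuot a P x + (2 / ⟪a, a⟫) • (vecC e a * P (reflect a x))))
        = ∑ a ∈ S.Rp, S.kap a • (vecC e a *
            (vecC e x * dQuot a P x + (2 / ⟪a, a⟫) • (vecC e a * P (reflect a x)))) := by
      rw [Finset.sum_congr rfl fun j (_ : j ∈ Finset.univ) => Finset.mul_sum _ _ _,
        Finset.sum_comm]
      refine Finset.sum_congr rfl fun a _ => ?_
      rw [show vecC e a * (vecC e x * dQuot a P x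
            + (2 / ⟪a, a⟫) • (vecC e a * P (reflect a x)))
          = ∑ j, a j • (e j * (vecC e x * dQuot a P x
            + (2 / ⟪a, a⟫) • (vecC e a * P (reflect a x)))) from by
        rw [show vecC e a = ∑ j, a j • e j from rfl, Finset.sum_mul]
        exact Finset.sum_congr rfl fun j _ => smul_mul_assoc _ _ _]
      rw [Finset.smul_sum]
      refine Finset.sum_congr rfl fun j _ => ?_
      rw [mul_smul_comm, smul_smul]
    rw [swap]
    have hterm : ∀ a ∈ S.Rp, S.kap a • (vecC e a *
          (vecC e x * dQuot a P x + (2 / ⟪a, a⟫) • (vecC e a * P (reflect a x))))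
        = -(S.kap a • (vecC e x * (vecC e a * dQuot a P x)))
          - (2:ℝ) • (S.kap a • (P x - P (reflect a x)))
          - (2:ℝ) • (S.kap a • P (reflect a x)) := by
      intro a ha
      have haa : ⟪a, a⟫ ≠ 0 := ne_of_gt (aux_Rp_inner_pos S ha)
      have h1 : vecC e a * (vecC e x * dQuot a P x)
          = -(vecC e x * (vecC e a * dQuot a P x)) - (2 * ⟪a, x⟫) • dQuot a P x := by
        rw [← mul_assoc, aux_vec_anti hrel a x, sub_mul, neg_mul, mul_assoc,
          smul_mul_assoc, one_mul]
      have h2 : vecC e a * ((2 / ⟪a, a⟫) • (vecC e a * P (reflect a x)))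
          = (-2 : ℝ) • P (reflect a x) := by
        rw [mul_smul_comm, ← mul_assoc, aux_vec_sq hrel, smul_mul_assoc, one_mul,
          smul_smul]
        congr 1
        generalize hc : ⟪a, a⟫ = c at haa ⊢
        field_simp
      have h3 : (2 * ⟪a, x⟫) • dQuot a P x = (2:ℝ) • (P x - P (reflect a x)) := by
        rw [mul_smul, aux_smul_dQuot]
      rw [mul_add, h1, h2, h3]
      module
    rw [Finset.sum_congr rfl hterm]
    have hgam : ∑ a ∈ S.Rp, S.kap a • (P x - P (reflect a x))
        + ∑ a ∈ S.Rp, S.kap a • P (reflect a x) = gam S • P x := by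
      rw [← Finset.sum_add_distrib]
      rw [Finset.sum_congr rfl fun a (_ : a ∈ S.Rp) => by
        rw [smul_sub, sub_add_cancel]]
      rw [← Finset.sum_smul]
      rfl
    rw [Finset.sum_sub_distrib, Finset.sum_sub_distrib, Finset.sum_neg_distrib,
      ← Finset.smul_sum, ← Finset.smul_sum, ← hgam]
    rw [show vecC e x * ∑ a ∈ S.Rp, S.kap a • (vecC e a * dQuot a P x)
        = ∑ a ∈ S.Rp, S.kap a • (vecC e x * (vecC e a * dQuot a P x)) from by
      rw [Finset.mul_sum]
      exact Finset.sum_congr rfl fun a _ => mul_smul_comm _ _ _]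
    module
  rw [hS1, hS2, hS3, aux_diracD_eq, mul_add]
  module
end diracxP
/-- Proposition 2.2: (i) `Γ_ω` annihilates radial functions; for a homogeneous
Dunkl-monogenic function `P` of degree `n` one has (ii) `Γ_ω P = −n P` and
(iii) `Γ_ω (ω P) = (μ + n − 1) ω P` (stated for `x̲ P`, which agrees with `ω P`
up to a radial factor), where `μ = 2γ_κ + d`. -/
theorem gammaOp_radial_and_monogenic (d : ℕ) (A : Type*) [NormedRing A] [NormedAlgebra ℝ A]
    (e : Fin d → A) (he : CliffordRel e) (S : DunklData d) (hγ : 0 < gam S) :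
    (∀ f : Vd d → A, (∀ x y : Vd d, ‖x‖ = ‖y‖ → f x = f y) →
      (∀ x : Vd d, x ≠ 0 → DifferentiableAt ℝ f x) →
      ∀ x : Vd d, x ≠ 0 → GammaOp e S f x = 0) ∧
    (∀ (n : ℝ) (P : Vd d → A), (∀ x : Vd d, x ≠ 0 → DifferentiableAt ℝ P x) →
      (∀ c : ℝ, 0 < c → ∀ x : Vd d, P (c • x) = (c ^ n) • P x) →
      (∀ x : Vd d, x ≠ 0 → diracD e S P x = 0) →
      (∀ x : Vd d, x ≠ 0 → GammaOp e S P x = (-n) • P x) ∧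
      (∀ x : Vd d, x ≠ 0 →
        GammaOp e S (fun y => vecC e y * P y) x
          = (dunklDim S + n - 1) • (vecC e x * P x))) := by
  obtain ⟨hrel, -⟩ := he
  have aux_inner_single : ∀ (v : Vd d) (j : Fin d), ⟪v, EuclideanSpace.single j (1:ℝ)⟫ = v j := by
    intro v j
    simp [EuclideanSpace.inner_single_right]
  constructor
  · -- (i) radial functions
    intro f hrad hdiff x hx
    obtain ⟨c, hc⟩ := aux_radial_fderiv hrad (hdiff x hx) hx
    have hQ : ∀ a ∈ S.Rp, dQuot a f x = 0 := by
      intro a ha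
      rw [dQuot]
      by_cases h : ⟪a, x⟫ = 0
      · rw [if_pos h, hc a, show ⟪x, a⟫ = 0 from by rw [real_inner_comm]; exact h,
          zero_smul, smul_zero]
      · rw [if_neg h, hrad x (reflect a x) (aux_norm_reflect a x).symm, sub_self, smul_zero]
    have hPhi : PhiOp e f x = 0 := by
      rw [PhiOp, neg_eq_zero]
      refine Finset.sum_eq_zero fun i _ => Finset.sum_eq_zero fun j _ => ?_
      rw [hc, hc, aux_inner_single, aux_inner_single, smul_smul, smul_smul, mul_comm (x i),
        sub_self, mul_zero]
    have hPsi : PsiOp e S f x = -(gam S • f x) := by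
      rw [PsiOp]
      have h1 : ∀ i : Fin d, ∀ j ∈ Finset.Ioi i, e i * e j *
          (∑ a ∈ S.Rp, (S.kap a * (x i * a j - x j * a i)) • dQuot a f x) = 0 := by
        intro i j _
        rw [Finset.sum_congr rfl fun a ha => by rw [hQ a ha, smul_zero], Finset.sum_const,
          smul_zero, mul_zero]
      rw [Finset.sum_congr rfl fun i (_ : i ∈ Finset.univ) => Finset.sum_eq_zero (h1 i),
        Finset.sum_const, smul_zero, neg_zero, zero_sub]
      congr 1
      rw [Finset.sum_congr rfl fun a (_ : a ∈ S.Rp) => by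
        rw [hrad (reflect a x) x (aux_norm_reflect a x)], ← Finset.sum_smul]
      rfl
    rw [GammaOp, hPhi, hPsi]
    abel
  · intro n P hdiff hhom hmono
    have key : ∀ (g : Vd d → A) (x : Vd d),
        GammaOp e S g x = -(fderiv ℝ g x x) - vecC e x * diracD e S g x := by
      intro g x
      have h := aux_master hrel S g x
      rw [h]
      abel
    constructor
    · -- (ii)
      intro x hx
      rw [key P x, hmono x hx, mul_zero, sub_zero, aux_euler (hdiff x hx) hhom, neg_smul]
    · -- (iii)
      intro x hx
      have hPd := hdiff x hx
      have heu := aux_euler hPd hhom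
      have hdir := aux_dirac_xP hrel S (P := P) (x := x) hPd
      rw [hmono x hx, mul_zero, sub_zero, heu] at hdir
      have hfx : fderiv ℝ (fun y => vecC e y * P y) x x
          = vecC e x * P x + n • (vecC e x * P x) := by
        rw [aux_fderiv_xP e hPd x, heu, mul_smul_comm]
      rw [key (fun y => vecC e y * P y) x, hfx, hdir]
      simp only [mul_sub, mul_neg, mul_smul_comm]
      rw [dunklDim]
      module
end
end
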